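/- Let γ : ℝ → ℝ² be a smooth closed unit-speed curve with period ℓ that is injective on [0, ℓ), and define F(x₀, t₀) = (4πt₀)^{−1/2} ∫₀^ℓ e^{−|γ(t)−x₀|²/(4t₀)} dt and λ(γ) = sup over x₀ ∈ ℝ², t₀ > 0 of F(x₀,t₀). If λ(γ) > 1, then there exist x₀ ∈ ℝ² and t₀ > 0 with F(x₀, t₀) = λ(γ). -/

import Mathlib

set_option maxHeartbeats 1000000


noncomputable section
open Real MeasureTheory
open scoped RealInnerProductSpace

abbrev E2 := EuclideanSpace ℝ (Fin 2)

/-- The Gaussian weighted length functional `F_{x₀,t₀}` of a closed curve of period `ℓ`. -/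
def Fcur (γ : ℝ → E2) (ℓ : ℝ) (x₀ : E2) (t₀ : ℝ) : ℝ :=
  (4 * π * t₀) ^ (-(1:ℝ)/2) * ∫ t in (0:ℝ)..ℓ, Real.exp (-‖γ t - x₀‖ ^ 2 / (4 * t₀))

/-- The entropy `λ(γ) = sup_{x₀,t₀} F_{x₀,t₀}(γ)` of a closed curve of period `ℓ`. -/
def entCur (γ : ℝ → E2) (ℓ : ℝ) : ℝ :=
  sSup {a : ℝ | ∃ x₀ : E2, ∃ t₀ : ℝ, 0 < t₀ ∧ a = Fcur γ ℓ x₀ t₀}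

section A
variable {γ : ℝ → E2} {ℓ : ℝ}

lemma per_deriv (hper : ∀ t, γ (t + ℓ) = γ t) : ∀ t, deriv γ (t + ℓ) = deriv γ t := by
  intro t
  have h : (fun x => γ (x + ℓ)) = γ := funext hper
  rw [← deriv_comp_add_const (f := γ) (a := ℓ), h]

/-- global second derivative bound -/
lemma second_deriv_bound (hγ : ContDiff ℝ (⊤ : ℕ∞) γ) (hℓ : 0 < ℓ)
    (hper : ∀ t, γ (t + ℓ) = γ t) :
    ∃ κ : ℝ, 1 ≤ κ ∧ ∀ u, ‖deriv (deriv γ) u‖ ≤ κ := by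
  have h1 : ContDiff ℝ (⊤:ℕ∞) (deriv γ) := (contDiff_infty_iff_deriv.mp hγ).2
  have hc : Continuous (deriv (deriv γ)) := (contDiff_infty_iff_deriv.mp h1).2.continuous
  have hper2 : ∀ t, deriv (deriv γ) (t + ℓ) = deriv (deriv γ) t :=
    per_deriv (per_deriv hper)
  -- periodic function, bounded on ℝ since bounded on [0,ℓ]
  obtain ⟨κ₀, hκ₀⟩ := (isCompact_Icc (a := (0:ℝ)) (b := ℓ)).exists_bound_of_continuousOn
    hc.continuousOn
  refine ⟨max κ₀ 1, le_max_right _ _, fun u => ?_⟩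
  have hp : Function.Periodic (deriv (deriv γ)) ℓ := hper2
  obtain ⟨n, hn⟩ : ∃ n : ℤ, u - n * ℓ ∈ Set.Ico 0 ℓ := by
    refine ⟨⌊u / ℓ⌋, ?_, ?_⟩
    · have := Int.sub_floor_div_mul_nonneg u hℓ; linarith
    · have := Int.sub_floor_div_mul_lt u hℓ; linarith
  have := hp.sub_int_mul_eq (x := u) n
  rw [← this]
  exact le_trans (hκ₀ _ ⟨hn.1, hn.2.le⟩) (le_max_left _ _)

/-- reduce any point mod ℓ into [0,ℓ) preserving γ -/
lemma gamma_mod (hℓ : 0 < ℓ) (hper : ∀ t, γ (t + ℓ) = γ t) (u : ℝ) :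
    ∃ a, a ∈ Set.Ico 0 ℓ ∧ γ a = γ u ∧ ∃ n : ℤ, a = u - n * ℓ := by
  have hp : Function.Periodic γ ℓ := hper
  refine ⟨u - ⌊u / ℓ⌋ * ℓ, ⟨?_, ?_⟩, hp.sub_int_mul_eq _, ⟨⌊u / ℓ⌋, rfl⟩⟩
  · have := Int.sub_floor_div_mul_nonneg u hℓ; linarith
  · have := Int.sub_floor_div_mul_lt u hℓ; linarith

lemma lip1 (hγ : ContDiff ℝ (⊤ : ℕ∞) γ) (hunit : ∀ t, ‖deriv γ t‖ = 1) (s t : ℝ) :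
    ‖γ t - γ s‖ ≤ |t - s| := by
  have hd : Differentiable ℝ γ := hγ.differentiable (by norm_num)
  have := Convex.norm_image_sub_le_of_norm_hasDerivWithin_le (f := γ) (f' := deriv γ)
    (s := Set.univ) (C := 1)
    (fun x _ => (hd x).hasDerivAt.hasDerivWithinAt)
    (fun x _ => (hunit x).le) convex_univ (Set.mem_univ s) (Set.mem_univ t)
  simpa using this

lemma lip_deriv (hγ : ContDiff ℝ (⊤ : ℕ∞) γ) {κ : ℝ} (hκ : ∀ u, ‖deriv (deriv γ) u‖ ≤ κ)
    (s t : ℝ) : ‖deriv γ t - deriv γ s‖ ≤ κ * |t - s| := by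
  have h1 : ContDiff ℝ (⊤:ℕ∞) (deriv γ) := (contDiff_infty_iff_deriv.mp hγ).2
  have hd : Differentiable ℝ (deriv γ) := h1.differentiable (by norm_num)
  have := Convex.norm_image_sub_le_of_norm_hasDerivWithin_le (f := deriv γ)
    (f' := deriv (deriv γ)) (s := Set.univ) (C := κ)
    (fun x _ => (hd x).hasDerivAt.hasDerivWithinAt)
    (fun x _ => hκ x) convex_univ (Set.mem_univ s) (Set.mem_univ t)
  simpa using this

lemma taylor1 (hγ : ContDiff ℝ (⊤ : ℕ∞) γ) {κ : ℝ} (hκ : ∀ u, ‖deriv (deriv γ) u‖ ≤ κ)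
    (hκ0 : 0 ≤ κ) (s t : ℝ) :
    ‖γ t - γ s - (t - s) • deriv γ s‖ ≤ κ * (t - s)^2 := by
  have hd : Differentiable ℝ γ := hγ.differentiable (by norm_num)
  set g : ℝ → E2 := fun u => γ u - (u - s) • deriv γ s with hg
  have hgd : ∀ u, HasDerivAt g (deriv γ u - deriv γ s) u := by
    intro u
    have h1 : HasDerivAt (fun u : ℝ => (u - s) • deriv γ s) (deriv γ s) u := by
      have := ((hasDerivAt_id u).sub_const s).smul_const (deriv γ s)
      simpa using this
    exact (hd u).hasDerivAt.sub h1
  have hb : ∀ x ∈ Set.uIcc s t, ‖(fun u => deriv γ u - deriv γ s) x‖ ≤ κ * |t - s| := by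
    intro x hx
    have h2 := lip_deriv hγ hκ s x
    have h3 : |x - s| ≤ |t - s| := by
      rcases Set.mem_uIcc.mp hx with ⟨h4, h5⟩ | ⟨h4, h5⟩ <;> rw [abs_le] <;> constructor <;>
        cases' abs_cases (t - s) with h h <;> cases' h with h h' <;> nlinarith
    exact le_trans h2 (by nlinarith)
  have key := Convex.norm_image_sub_le_of_norm_hasDerivWithin_le (f := g)
    (f' := fun u => deriv γ u - deriv γ s) (s := Set.uIcc s t) (C := κ * |t - s|)
    (fun x _ => (hgd x).hasDerivWithinAt) hb (convex_uIcc s t)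
    (Set.left_mem_uIcc) (Set.right_mem_uIcc)
  have hgs : g s = γ s := by simp [hg]
  have hgt : g t = γ t - (t - s) • deriv γ s := by simp [hg]
  rw [hgs, hgt] at key
  have h5 : γ t - (t - s) • deriv γ s - γ s = γ t - γ s - (t - s) • deriv γ s := by abel
  rw [h5] at key
  refine le_trans key ?_
  rw [Real.norm_eq_abs, mul_assoc]
  have : |t - s| * |t - s| = (t-s)^2 := by rw [← abs_mul, abs_of_nonneg (mul_self_nonneg _)]; ring
  rw [this]

lemma sep_bound (hγ : ContDiff ℝ (⊤ : ℕ∞) γ) (hℓ : 0 < ℓ) (hper : ∀ t, γ (t + ℓ) = γ t)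
    (hinj : Set.InjOn γ (Set.Ico 0 ℓ)) {r : ℝ} (hr : 0 < r) (hr2 : r ≤ ℓ/2) :
    ∃ d₀ > 0, ∀ t s : ℝ, r ≤ |s| → |s| ≤ ℓ/2 → d₀ ≤ ‖γ (t + s) - γ t‖ := by
  have hcont : Continuous γ := hγ.continuous
  set B : Set (ℝ × ℝ) := Set.Icc 0 ℓ ×ˢ Set.Icc r (ℓ/2) with hB
  have hBc : IsCompact B := (isCompact_Icc).prod isCompact_Icc
  have hBne : B.Nonempty := ⟨(0, r), by
    constructor
    · exact ⟨le_refl _, hℓ.le⟩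
    · exact ⟨le_refl _, hr2⟩⟩
  have hf : Continuous (fun p : ℝ × ℝ => ‖γ (p.1 + p.2) - γ p.1‖) := by fun_prop
  obtain ⟨p₀, hp₀B, hmin⟩ := hBc.exists_isMinOn hBne hf.continuousOn
  set d₀ := ‖γ (p₀.1 + p₀.2) - γ p₀.1‖ with hd₀
  have hd₀pos : 0 < d₀ := by
    rw [hd₀, norm_pos_iff, sub_ne_zero]
    intro heq
    obtain ⟨a', ha'mem, ha'eq, n, hn⟩ := gamma_mod hℓ hper p₀.1
    obtain ⟨c', hc'mem, hc'eq, m, hm⟩ := gamma_mod hℓ hper (p₀.1 + p₀.2)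
    have : c' = a' := hinj hc'mem ha'mem (by rw [hc'eq, ha'eq, heq])
    have hb : p₀.2 = (m - n : ℤ) * ℓ := by
      push_cast; rw [sub_mul]; have := hn ▸ hm ▸ this; linarith [this]
    obtain ⟨h1, h2⟩ := hp₀B.2
    rcases eq_or_ne (m - n) 0 with h | h
    · rw [h] at hb; simp at hb; linarith
    · have habs : (1:ℝ) ≤ |((m - n : ℤ) : ℝ)| := by
        rw [← Int.cast_abs]; exact_mod_cast Int.one_le_abs h
      have h3 : ℓ ≤ |p₀.2| := by
        rw [hb, abs_mul, abs_of_pos hℓ]; nlinarith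
      rw [abs_of_pos (lt_of_lt_of_le hr h1)] at h3; linarith
  refine ⟨d₀, hd₀pos, fun t s hs1 hs2 => ?_⟩
  have hp : Function.Periodic γ ℓ := hper
  rcases abs_cases s with ⟨he, hpos⟩ | ⟨he, hneg⟩
  · -- s ≥ 0, so s = |s| ≥ r > 0
    obtain ⟨a', ha'mem, ha'eq, n, hn⟩ := gamma_mod hℓ hper t
    have key := hmin (show (a', s) ∈ B from
      ⟨⟨ha'mem.1, ha'mem.2.le⟩, ⟨he ▸ hs1, he ▸ hs2⟩⟩)
    have h4 : γ (a' + s) = γ (t + s) := by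
      rw [hn, show t - n * ℓ + s = (t + s) - n * ℓ by ring, hp.sub_int_mul_eq]
    calc d₀ ≤ ‖γ (a' + s) - γ a'‖ := key
      _ = ‖γ (t + s) - γ t‖ := by rw [h4, ha'eq]
  · -- s < 0
    obtain ⟨a', ha'mem, ha'eq, n, hn⟩ := gamma_mod hℓ hper (t + s)
    have key := hmin (show (a', -s) ∈ B from
      ⟨⟨ha'mem.1, ha'mem.2.le⟩, ⟨he ▸ hs1, he ▸ hs2⟩⟩)
    have h4 : γ (a' + -s) = γ t := by
      rw [hn, show t + s - n * ℓ + -s = t - n * ℓ by ring, hp.sub_int_mul_eq]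
    calc d₀ ≤ ‖γ (a' + -s) - γ a'‖ := key
      _ = ‖γ (t + s) - γ t‖ := by rw [h4, ha'eq, norm_sub_rev]

lemma pref_eq {t : ℝ} (ht : 0 < t) :
    (4 * π * t) ^ (-(1:ℝ)/2) = (Real.sqrt (4 * π * t))⁻¹ := by
  have h : (0:ℝ) < 4 * π * t := by positivity
  rw [show (-(1:ℝ)/2) = -(1/2 : ℝ) by ring, Real.rpow_neg h.le, Real.sqrt_eq_rpow]

lemma Fcur_le_of_dist {x : E2} {t₀ m : ℝ} (hγ : ContDiff ℝ (⊤ : ℕ∞) γ) (hℓ : 0 < ℓ)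
    (ht₀ : 0 < t₀) (hm : 0 ≤ m) (hdist : ∀ t, m ≤ ‖γ t - x‖) :
    Fcur γ ℓ x t₀ ≤ (Real.sqrt (4 * π * t₀))⁻¹ * (ℓ * Real.exp (-m^2/(4*t₀))) := by
  have hcont : Continuous γ := hγ.continuous
  rw [Fcur, pref_eq ht₀]
  have hpos : (0:ℝ) ≤ (Real.sqrt (4 * π * t₀))⁻¹ := by positivity
  apply mul_le_mul_of_nonneg_left ?_ hpos
  have hcint : Continuous fun t => Real.exp (-‖γ t - x‖^2/(4*t₀)) := by fun_prop
  calc (∫ t in (0:ℝ)..ℓ, Real.exp (-‖γ t - x‖ ^ 2 / (4 * t₀)))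
      ≤ ∫ _ in (0:ℝ)..ℓ, Real.exp (-m^2/(4*t₀)) := by
        apply intervalIntegral.integral_mono_on hℓ.le (hcint.intervalIntegrable _ _)
          (intervalIntegrable_const)
        intro t _
        apply Real.exp_le_exp.mpr
        apply (div_le_div_iff_of_pos_right (by positivity : (0:ℝ) < 4*t₀)).mpr
        have h1 : m^2 ≤ ‖γ t - x‖^2 := by nlinarith [hdist t, hm]
        linarith
    _ = ℓ * Real.exp (-m^2/(4*t₀)) := by
        rw [intervalIntegral.integral_const, smul_eq_mul, sub_zero]

lemma Fcur_nonneg {x : E2} {t₀ : ℝ} (hγ : ContDiff ℝ (⊤ : ℕ∞) γ) (hℓ : 0 < ℓ)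
    (ht₀ : 0 < t₀) : 0 ≤ Fcur γ ℓ x t₀ := by
  have hcont : Continuous γ := hγ.continuous
  rw [Fcur]
  apply mul_nonneg (by positivity)
  rw [intervalIntegral.integral_of_le hℓ.le]
  positivity

lemma sqrt_inv_anti {a b : ℝ} (ha : 0 < a) (hab : a ≤ b) :
    (Real.sqrt (4 * π * b))⁻¹ ≤ (Real.sqrt (4 * π * a))⁻¹ := by
  apply inv_anti₀ (by positivity)
  apply Real.sqrt_le_sqrt
  nlinarith [pi_pos]

lemma tail_small {ℓ ε c δ t₀ y : ℝ} (hℓ : 0 < ℓ) (hε : 0 < ε) (hc : 0 < c)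
    (hδ : δ = min 1 (ε * c^2/(16*ℓ))) (ht₀ : 0 < t₀) (ht₀δ : t₀ ≤ δ) (hy : c ≤ y) :
    (Real.sqrt (4*π*t₀))⁻¹ * (ℓ * Real.exp (-y/t₀)) ≤ ε/2 := by
  have ht1 : t₀ ≤ 1 := le_trans ht₀δ (hδ ▸ min_le_left _ _)
  have ht2 : t₀ ≤ ε * c^2/(16*ℓ) := le_trans ht₀δ (hδ ▸ min_le_right _ _)
  have hy0 : 0 < y := lt_of_lt_of_le hc hy
  set q := y / (2*t₀) with hq
  have hq0 : 0 < q := by positivity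
  have h1 : q ≤ Real.exp q := by linarith [Real.add_one_le_exp q]
  have h2 : Real.exp (y/t₀) = Real.exp q * Real.exp q := by
    rw [← Real.exp_add, hq]; congr 1; field_simp; ring
  have h3 : q^2 ≤ Real.exp (y/t₀) := by rw [h2]; nlinarith [Real.exp_pos q]
  have hexp : Real.exp (-y/t₀) ≤ 4*t₀^2/y^2 := by
    rw [neg_div, Real.exp_neg]
    have hq2 : (0:ℝ) < q^2 := by positivity
    have := inv_anti₀ hq2 h3
    refine le_trans this ?_
    rw [hq]
    rw [div_pow, inv_div]
    apply le_of_eq; congr 1; ring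
  have hpref : (Real.sqrt (4*π*t₀))⁻¹ ≤ (Real.sqrt t₀)⁻¹ := by
    apply inv_anti₀ (Real.sqrt_pos.mpr ht₀)
    apply Real.sqrt_le_sqrt; nlinarith [pi_gt_three]
  set u := Real.sqrt t₀ with hus
  have hu2 : u^2 = t₀ := Real.sq_sqrt ht₀.le
  have hupos : 0 < u := Real.sqrt_pos.mpr ht₀
  have hu1 : u ≤ 1 := by rw [hus]; rw [show (1:ℝ) = Real.sqrt 1 by simp]; exact Real.sqrt_le_sqrt ht1
  calc (Real.sqrt (4*π*t₀))⁻¹ * (ℓ * Real.exp (-y/t₀))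
      ≤ u⁻¹ * (ℓ * (4*t₀^2/y^2)) := by
        apply mul_le_mul hpref (mul_le_mul_of_nonneg_left hexp hℓ.le) (by positivity) (by positivity)
    _ ≤ ε/2 := by
        rw [inv_mul_le_iff₀ hupos]
        have hyc : c^2 ≤ y^2 := by nlinarith
        have hstep : ℓ * (4*t₀^2/y^2) ≤ ℓ * (4*t₀^2/c^2) := by
          apply mul_le_mul_of_nonneg_left ?_ hℓ.le
          apply div_le_div_of_nonneg_left (by positivity) (by positivity) hyc
        refine le_trans hstep ?_
        rw [le_div_iff₀ (by positivity : (0:ℝ) < 16*ℓ)] at ht2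
        have h8 : t₀^2 ≤ t₀ * u := by nlinarith
        rw [← sub_nonneg]
        have expand : u * (ε/2) - ℓ * (4*t₀^2/c^2) =
            (u*ε*c^2/2 - 4*ℓ*t₀^2) / c^2 := by field_simp
        rw [expand]
        apply div_nonneg ?_ (by positivity)
        nlinarith [mul_le_mul_of_nonneg_left ht2 hupos.le, mul_le_mul_of_nonneg_left h8 (by positivity : (0:ℝ) ≤ 4*ℓ), hupos.le, hε.le, hℓ.le, mul_nonneg (mul_nonneg hupos.le hε.le) (sq_nonneg c)]

lemma gauss_interval_le {b : ℝ} (hb : 0 < b) (r : ℝ) :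
    ∫ x in (-r)..r, Real.exp (-b * x^2) ≤ Real.sqrt (π / b) := by
  rw [← integral_gaussian b]
  rcases le_or_gt (-r) r with h | h
  · rw [intervalIntegral.integral_of_le h]
    exact MeasureTheory.setIntegral_le_integral (integrable_exp_neg_mul_sq hb)
      (Filter.Eventually.of_forall fun x => (Real.exp_pos _).le)
  · rw [intervalIntegral.integral_of_ge h.le]
    have h1 : (0:ℝ) ≤ ∫ x, Real.exp (-b * x^2) := by positivity
    have h2 : (0:ℝ) ≤ ∫ x in Set.Ioc r (-r), Real.exp (-b*x^2) := by positivity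
    linarith

lemma sqrt_one_sub_inv_le {ε : ℝ} (hε : 0 < ε) (hε1 : ε ≤ 1) :
    (Real.sqrt (1 - ε/2))⁻¹ ≤ 1 + ε/2 := by
  have hpos : (0:ℝ) < 1 - ε/2 := by linarith
  set u := Real.sqrt (1 - ε/2) with hu
  have hu2 : u^2 = 1 - ε/2 := Real.sq_sqrt hpos.le
  have hup : 0 < u := Real.sqrt_pos.mpr hpos
  rw [inv_eq_one_div, div_le_iff₀ hup]
  have hP2 : 1 ≤ ((1 + ε/2) * u)^2 := by
    rw [mul_pow, hu2]
    nlinarith [hε, hε1, sq_nonneg ε, mul_nonneg (mul_nonneg hε.le hε.le) hε.le]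
  nlinarith [hP2, mul_pos (show (0:ℝ) < 1 + ε/2 by linarith) hup]

lemma near_bound (hγ : ContDiff ℝ (⊤ : ℕ∞) γ) {κ : ℝ}
    (hκ : ∀ u, ‖deriv (deriv γ) u‖ ≤ κ) (hκ1 : 1 ≤ κ)
    (hunit : ∀ t, ‖deriv γ t‖ = 1) {x : E2} {tstar ε : ℝ}
    (hortho : ⟪deriv γ tstar, γ tstar - x⟫ = 0)
    (hε : 0 < ε) (hmε : ‖γ tstar - x‖ ≤ ε/(8*κ)) {s : ℝ} (hsε : |s| ≤ ε/(8*κ)) :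
    (1 - ε/2) * s^2 ≤ ‖γ (tstar + s) - x‖^2 := by
  have hκ0 : (0:ℝ) < κ := lt_of_lt_of_le one_pos hκ1
  set v := γ tstar - x with hv
  set w := deriv γ tstar with hw
  set m := ‖v‖ with hmdef
  have hm0 : 0 ≤ m := norm_nonneg _
  have hwn : ‖w‖ = 1 := hunit tstar
  set R := γ (tstar + s) - γ tstar - s • w with hR
  have hRle : ‖R‖ ≤ κ * s^2 := by
    have := taylor1 hγ hκ (by linarith) tstar (tstar + s)
    simpa [hR, hw] using this
  have hdecomp : γ (tstar + s) - x = (v + s • w) + R := by rw [hR, hv]; abel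
  have h1 : ‖v + s • w‖^2 = m^2 + s^2 := by
    rw [norm_add_sq_real]
    have hinner : ⟪v, s • w⟫ = 0 := by
      rw [real_inner_smul_right, real_inner_comm, hortho, mul_zero]
    rw [hinner, norm_smul, hwn]
    simp [sq_abs, mul_one, hmdef]
  have hnle : ‖v + s • w‖ ≤ m + |s| := by
    refine le_trans (norm_add_le _ _) ?_
    rw [norm_smul, hwn, mul_one, Real.norm_eq_abs]
  have h2 : -((m + |s|) * (κ * s^2)) ≤ ⟪v + s • w, R⟫ := by
    have ha := abs_real_inner_le_norm (v + s • w) R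
    have hb : ‖v + s • w‖ * ‖R‖ ≤ (m + |s|) * (κ * s^2) := by
      apply mul_le_mul hnle hRle (norm_nonneg _)
      positivity
    have := neg_abs_le ⟪v + s • w, R⟫
    nlinarith [abs_nonneg ⟪v + s • w, R⟫]
  have h3 : ‖γ (tstar + s) - x‖^2 = ‖v + s • w‖^2 + 2 * ⟪v + s • w, R⟫ + ‖R‖^2 := by
    rw [hdecomp, norm_add_sq_real]
  have key : 2 * (m + |s|) * κ ≤ ε/2 := by
    have hsum : m + |s| ≤ ε/(4*κ) := by
      have : ε/(8*κ) + ε/(8*κ) = ε/(4*κ) := by ring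
      linarith
    calc 2 * (m + |s|) * κ ≤ 2 * (ε/(4*κ)) * κ := by nlinarith
      _ = ε/2 := by field_simp; ring
  nlinarith [mul_le_mul_of_nonneg_right key (sq_nonneg s), h2, h3, h1,
    sq_nonneg m, sq_nonneg ‖R‖, sq_nonneg s]

lemma small_time (hγ : ContDiff ℝ (⊤ : ℕ∞) γ) (hunit : ∀ t, ‖deriv γ t‖ = 1)
    (hℓ : 0 < ℓ) (hper : ∀ t, γ (t + ℓ) = γ t) (hinj : Set.InjOn γ (Set.Ico 0 ℓ))
    {ε : ℝ} (hε : 0 < ε) (hε1 : ε ≤ 1) :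
    ∃ δ > 0, ∀ (x : E2) (t₀ : ℝ), 0 < t₀ → t₀ ≤ δ → Fcur γ ℓ x t₀ ≤ 1 + ε := by
  have hcont : Continuous γ := hγ.continuous
  obtain ⟨κ, hκ1, hκ⟩ := second_deriv_bound hγ hℓ hper
  have hκ0 : (0:ℝ) < κ := lt_of_lt_of_le one_pos hκ1
  set r := min (ℓ/2) (ε/(8*κ)) with hrdef
  have hr0 : 0 < r := lt_min (by linarith) (by positivity)
  have hrℓ : r ≤ ℓ/2 := min_le_left _ _
  have hrε : r ≤ ε/(8*κ) := min_le_right _ _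
  obtain ⟨d₀, hd₀, hsep⟩ := sep_bound hγ hℓ hper hinj hr0 hrℓ
  set m₀ := min (ε/(8*κ)) (d₀/2) with hm₀def
  have hm₀pos : 0 < m₀ := lt_min (by positivity) (by linarith)
  set c := min (d₀^2/16) (m₀^2/4) with hcdef
  have hcpos : 0 < c := lt_min (by positivity) (by positivity)
  refine ⟨min 1 (ε * c^2/(16*ℓ)), lt_min one_pos (by positivity), fun x t₀ ht₀ ht₀δ => ?_⟩
  -- minimum point
  obtain ⟨tstar, htsmem, hmin⟩ := (isCompact_Icc (a := (0:ℝ)) (b := ℓ)).exists_isMinOn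
    ⟨0, by constructor <;> [exact le_refl 0; exact hℓ.le]⟩
    (Continuous.continuousOn (by fun_prop : Continuous fun t => ‖γ t - x‖))
  have hglob : ∀ t, ‖γ tstar - x‖ ≤ ‖γ t - x‖ := by
    intro t
    obtain ⟨a, hamem, haeq, _⟩ := gamma_mod hℓ hper t
    have := hmin (show a ∈ Set.Icc 0 ℓ from ⟨hamem.1, hamem.2.le⟩)
    simpa [haeq] using this
  set m := ‖γ tstar - x‖ with hmdef
  by_cases hcase : m ≤ m₀
  · -- main case: x close to the curve
    -- orthogonality at the minimum
    have hd : Differentiable ℝ γ := hγ.differentiable (by norm_num)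
    have hder : HasDerivAt (fun t => γ t - x) (deriv γ tstar) tstar :=
      (hd tstar).hasDerivAt.sub_const x
    have hasD := hder.inner ℝ hder
    have hfeq : (fun t => ⟪γ t - x, γ t - x⟫) = fun t => ‖γ t - x‖^2 := by
      funext t; rw [real_inner_self_eq_norm_sq]
    have hlocmin : IsLocalMin (fun t => ‖γ t - x‖^2) tstar := by
      apply Filter.Eventually.of_forall
      intro t
      show ‖γ tstar - x‖^2 ≤ ‖γ t - x‖^2
      have h5 := hglob t
      nlinarith [norm_nonneg (γ tstar - x), norm_nonneg (γ t - x)]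
    have hderiv0 := hlocmin.hasDerivAt_eq_zero (hfeq ▸ hasD)
    have hortho : ⟪deriv γ tstar, γ tstar - x⟫ = 0 := by
      rw [real_inner_comm] at hderiv0
      -- hderiv0 : ⟪deriv γ tstar, γ tstar - x⟫ + ⟪deriv γ tstar, γ tstar - x⟫ = 0
      linarith [hderiv0]
    have hmε : ‖γ tstar - x‖ ≤ ε/(8*κ) := le_trans hcase (min_le_left _ _)
    -- integral setup
    set h : ℝ → ℝ := fun t => Real.exp (-‖γ t - x‖^2/(4*t₀)) with hh
    have hhcont : Continuous h := by fun_prop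
    have hint : ∀ a b : ℝ, IntervalIntegrable h volume a b :=
      fun a b => hhcont.intervalIntegrable a b
    have hper_h : Function.Periodic h ℓ := fun t => by simp [hh, hper t]
    set a := tstar - ℓ/2 with ha
    have heq : ∫ t in (0:ℝ)..ℓ, h t = ∫ t in a..(a + ℓ), h t := by
      have := hper_h.intervalIntegral_add_eq 0 a
      rw [zero_add] at this; exact this
    have hsplit : ∫ t in a..(a + ℓ), h t =
        (∫ t in a..(tstar - r), h t) + (∫ t in (tstar - r)..(tstar + r), h t)
          + ∫ t in (tstar + r)..(a + ℓ), h t := by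
      rw [intervalIntegral.integral_add_adjacent_intervals (hint _ _) (hint _ _),
        intervalIntegral.integral_add_adjacent_intervals (hint _ _) (hint _ _)]
    -- far distance bound
    have hfar : ∀ t : ℝ, r ≤ |t - tstar| → |t - tstar| ≤ ℓ/2 → d₀/2 ≤ ‖γ t - x‖ := by
      intro t h1 h2
      have hst := hsep tstar (t - tstar) h1 h2
      rw [add_sub_cancel] at hst
      have htri : ‖γ t - γ tstar‖ ≤ ‖γ t - x‖ + ‖γ tstar - x‖ := by
        have := norm_sub_le (γ t - x) (γ tstar - x)
        simpa [sub_sub_sub_cancel_right] using this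
      have hm₀d : ‖γ tstar - x‖ ≤ d₀/2 := le_trans hcase (min_le_right _ _)
      linarith
    have hfarexp : ∀ t : ℝ, r ≤ |t - tstar| → |t - tstar| ≤ ℓ/2 →
        h t ≤ Real.exp (-(d₀^2/16)/t₀) := by
      intro t h1 h2
      rw [hh]
      apply Real.exp_le_exp.mpr
      have hd2 := hfar t h1 h2
      have hsq : (d₀/2)^2 ≤ ‖γ t - x‖^2 := by nlinarith [hd₀.le]
      have heq2 : -(d₀^2/16)/t₀ = -((d₀/2)^2)/(4*t₀) := by ring
      rw [heq2, neg_div, neg_div, neg_le_neg_iff]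
      apply div_le_div_of_nonneg_right hsq ?_ |>.trans_eq rfl
      positivity
    -- far piece bounds
    have hfar1 : ∫ t in a..(tstar - r), h t ≤ (ℓ/2 - r) * Real.exp (-(d₀^2/16)/t₀) := by
      have hle : a ≤ tstar - r := by rw [ha]; linarith
      calc ∫ t in a..(tstar - r), h t ≤ ∫ _ in a..(tstar - r), Real.exp (-(d₀^2/16)/t₀) := by
            apply intervalIntegral.integral_mono_on hle (hint _ _) intervalIntegrable_const
            intro t ht
            have ht1 : a ≤ t := ht.1
            have ht2 : t ≤ tstar - r := ht.2
            rw [ha] at ht1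
            have hnp : t - tstar ≤ 0 := by linarith
            apply hfarexp t <;> rw [abs_of_nonpos hnp] <;> linarith
        _ = (ℓ/2 - r) * Real.exp (-(d₀^2/16)/t₀) := by
            rw [intervalIntegral.integral_const, smul_eq_mul, ha]; ring_nf
    have hfar2 : ∫ t in (tstar + r)..(a + ℓ), h t ≤ (ℓ/2 - r) * Real.exp (-(d₀^2/16)/t₀) := by
      have hle : tstar + r ≤ a + ℓ := by rw [ha]; linarith
      calc ∫ t in (tstar + r)..(a + ℓ), h t
          ≤ ∫ _ in (tstar + r)..(a + ℓ), Real.exp (-(d₀^2/16)/t₀) := by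
            apply intervalIntegral.integral_mono_on hle (hint _ _) intervalIntegrable_const
            intro t ht
            have ht1 : tstar + r ≤ t := ht.1
            have ht2 : t ≤ a + ℓ := ht.2
            rw [ha] at ht2
            have hnp : 0 ≤ t - tstar := by linarith
            apply hfarexp t <;> rw [abs_of_nonneg hnp] <;> linarith
        _ = (ℓ/2 - r) * Real.exp (-(d₀^2/16)/t₀) := by
            rw [intervalIntegral.integral_const, smul_eq_mul, ha]; ring_nf
    -- near piece
    have h1ε : (0:ℝ) < 1 - ε/2 := by linarith
    set b' := (1 - ε/2)/(4*t₀) with hb'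
    have hb'0 : 0 < b' := by positivity
    have hnear : ∫ t in (tstar - r)..(tstar + r), h t ≤ Real.sqrt (π / b') := by
      calc ∫ t in (tstar - r)..(tstar + r), h t
          ≤ ∫ t in (tstar - r)..(tstar + r), Real.exp (-b' * (t - tstar)^2) := by
            apply intervalIntegral.integral_mono_on (by linarith) (hint _ _)
              (Continuous.intervalIntegrable (by fun_prop) _ _)
            intro t ht
            have hts : |t - tstar| ≤ ε/(8*κ) := by
              rw [abs_le]; constructor <;> [linarith [ht.1, hrε]; linarith [ht.2, hrε]]
            have hnb := near_bound hγ hκ hκ1 hunit hortho hε hmε hts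
            rw [add_sub_cancel] at hnb
            rw [hh]
            apply Real.exp_le_exp.mpr
            have heq3 : -b' * (t - tstar)^2 = -((1 - ε/2) * (t - tstar)^2)/(4*t₀) := by
              rw [hb']; ring
            rw [heq3, neg_div, neg_div, neg_le_neg_iff]
            apply div_le_div_of_nonneg_right hnb ?_ |>.trans_eq rfl
            positivity
        _ = ∫ s in (-r)..r, Real.exp (-b' * s^2) := by
            have := intervalIntegral.integral_comp_sub_right
              (a := tstar - r) (b := tstar + r) (fun s => Real.exp (-b' * s^2)) tstar
            simpa using this
        _ ≤ Real.sqrt (π / b') := gauss_interval_le hb'0 r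
    -- combine
    have hprefpos : (0:ℝ) < Real.sqrt (4*π*t₀) := by positivity
    have hnear2 : (Real.sqrt (4*π*t₀))⁻¹ * Real.sqrt (π / b') ≤ 1 + ε/2 := by
      have hsq : Real.sqrt (π / b') = Real.sqrt (4*π*t₀) * (Real.sqrt (1 - ε/2))⁻¹ := by
        rw [hb', show π / ((1 - ε/2)/(4*t₀)) = (4*π*t₀) / (1 - ε/2) by field_simp,
          Real.sqrt_div (by positivity : (0:ℝ) ≤ 4*π*t₀), div_eq_mul_inv]
      rw [hsq, ← mul_assoc, inv_mul_cancel₀ (ne_of_gt hprefpos), one_mul]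
      exact sqrt_one_sub_inv_le hε hε1
    have htail := tail_small hℓ hε hcpos rfl ht₀ ht₀δ (min_le_left _ _ : c ≤ d₀^2/16)
    rw [Fcur, pref_eq ht₀]
    have hIeq : (∫ t in (0:ℝ)..ℓ, Real.exp (-‖γ t - x‖ ^ 2 / (4 * t₀))) = ∫ t in (0:ℝ)..ℓ, h t := by
      rfl
    rw [hIeq, heq, hsplit]
    have hexp0 : (0:ℝ) ≤ Real.exp (-(d₀^2/16)/t₀) := (Real.exp_pos _).le
    have hnear3 : (0:ℝ) ≤ ∫ t in (tstar - r)..(tstar + r), h t := by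
      apply intervalIntegral.integral_nonneg (by linarith)
      intro u _; rw [hh]; positivity
    have hfpos : (0:ℝ) ≤ (Real.sqrt (4*π*t₀))⁻¹ := by positivity
    have hcomb : (Real.sqrt (4*π*t₀))⁻¹ *
        ((∫ t in a..(tstar - r), h t) + (∫ t in (tstar - r)..(tstar + r), h t)
          + ∫ t in (tstar + r)..(a + ℓ), h t)
        ≤ (Real.sqrt (4*π*t₀))⁻¹ * (ℓ * Real.exp (-(d₀^2/16)/t₀))
          + (Real.sqrt (4*π*t₀))⁻¹ * Real.sqrt (π / b') := by
      have hsum : (∫ t in a..(tstar - r), h t) + (∫ t in (tstar - r)..(tstar + r), h t)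
          + ∫ t in (tstar + r)..(a + ℓ), h t
          ≤ ℓ * Real.exp (-(d₀^2/16)/t₀) + Real.sqrt (π / b') := by
        have : (ℓ/2 - r) * Real.exp (-(d₀^2/16)/t₀) + (ℓ/2 - r) * Real.exp (-(d₀^2/16)/t₀)
            ≤ ℓ * Real.exp (-(d₀^2/16)/t₀) := by nlinarith [hr0, hexp0]
        linarith [hfar1, hfar2, hnear]
      calc (Real.sqrt (4*π*t₀))⁻¹ * _ ≤ (Real.sqrt (4*π*t₀))⁻¹ *
            (ℓ * Real.exp (-(d₀^2/16)/t₀) + Real.sqrt (π / b')) :=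
          mul_le_mul_of_nonneg_left hsum hfpos
        _ = _ := by ring
    refine le_trans hcomb ?_
    linarith [htail, hnear2]
  · -- x far from the curve
    have hdist : ∀ t, m₀ ≤ ‖γ t - x‖ := fun t =>
      le_trans (not_le.mp hcase).le (hglob t)
    have hF := Fcur_le_of_dist hγ hℓ ht₀ hm₀pos.le hdist
    have heq2 : -m₀^2/(4*t₀) = -(m₀^2/4)/t₀ := by ring
    rw [heq2] at hF
    have htail := tail_small hℓ hε hcpos rfl ht₀ ht₀δ (min_le_right _ _ : c ≤ m₀^2/4)
    linarith [hF.trans htail]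

lemma Fcur_contOn (hγ : ContDiff ℝ (⊤ : ℕ∞) γ) {δ T : ℝ} (hδ : 0 < δ) :
    ContinuousOn (fun p : E2 × ℝ => Fcur γ ℓ p.1 p.2) (Set.univ ×ˢ Set.Icc δ T) := by
  have hcont : Continuous γ := hγ.continuous
  set G : E2 × ℝ → ℝ := fun p =>
    (4 * π * max p.2 δ) ^ (-(1:ℝ)/2) *
      ∫ t in (0:ℝ)..ℓ, Real.exp (-‖γ t - p.1‖ ^ 2 / (4 * max p.2 δ)) with hG
  have hGc : Continuous G := by
    apply Continuous.mul
    · apply Continuous.rpow_const (by fun_prop)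
      intro p; left
      have : 0 < 4 * π * max p.2 δ := by
        have : 0 < max p.2 δ := lt_of_lt_of_le hδ (le_max_right _ _)
        positivity
      exact ne_of_gt this
    · apply intervalIntegral.continuous_parametric_intervalIntegral_of_continuous'
        (f := fun (p : E2 × ℝ) (t : ℝ) => Real.exp (-‖γ t - p.1‖ ^ 2 / (4 * max p.2 δ)))
      show Continuous fun q : (E2 × ℝ) × ℝ => Real.exp (-‖γ q.2 - q.1.1‖ ^ 2 / (4 * max q.1.2 δ))
      apply Real.continuous_exp.comp
      apply Continuous.div (by fun_prop) (by fun_prop)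
      intro q
      have : 0 < max q.1.2 δ := lt_of_lt_of_le hδ (le_max_right _ _)
      positivity
  apply hGc.continuousOn.congr
  intro p hp
  have hpδ : δ ≤ p.2 := (Set.mem_prod.mp hp).2.1
  have hmax : max p.2 δ = p.2 := max_eq_left hpδ
  simp only [hG, Fcur, hmax]

lemma Fcur_le_basic {x : E2} {t₀ : ℝ} (hγ : ContDiff ℝ (⊤ : ℕ∞) γ) (hℓ : 0 < ℓ)
    (ht₀ : 0 < t₀) : Fcur γ ℓ x t₀ ≤ (Real.sqrt (4 * π * t₀))⁻¹ * ℓ := by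
  have := Fcur_le_of_dist (x := x) hγ hℓ ht₀ (le_refl 0) (fun t => norm_nonneg _)
  simpa using this

lemma ent_bddAbove (hγ : ContDiff ℝ (⊤ : ℕ∞) γ) (hunit : ∀ t, ‖deriv γ t‖ = 1)
    (hℓ : 0 < ℓ) (hper : ∀ t, γ (t + ℓ) = γ t) (hinj : Set.InjOn γ (Set.Ico 0 ℓ)) :
    BddAbove {a : ℝ | ∃ x₀ : E2, ∃ t₀ : ℝ, 0 < t₀ ∧ a = Fcur γ ℓ x₀ t₀} := by
  obtain ⟨δ, hδ0, hδ⟩ := small_time hγ hunit hℓ hper hinj one_pos (le_refl 1)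
  refine ⟨max 2 ((Real.sqrt (4 * π * δ))⁻¹ * ℓ), fun a ⟨x, t₀, ht₀, haeq⟩ => ?_⟩
  subst haeq
  rcases le_or_gt t₀ δ with h | h
  · exact le_trans (by have := hδ x t₀ ht₀ h; linarith) (le_max_left _ _)
  · refine le_trans (Fcur_le_basic hγ hℓ ht₀) (le_trans ?_ (le_max_right _ _))
    exact mul_le_mul_of_nonneg_right (sqrt_inv_anti hδ0 h.le) hℓ.le


/-- For a smooth closed embedded unit-speed curve with entropy `λ(γ) > 1`,
the entropy is attained: `λ(γ) = F_{x₀,t₀}(γ)` for some `x₀ ∈ ℝ²`, `t₀ > 0`. -/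
theorem stmt15 (γ : ℝ → E2) (hγ : ContDiff ℝ (⊤ : ℕ∞) γ)
    (hunit : ∀ t, ‖deriv γ t‖ = 1)
    (ℓ : ℝ) (hℓ : 0 < ℓ) (hper : ∀ t, γ (t + ℓ) = γ t)
    (hinj : Set.InjOn γ (Set.Ico 0 ℓ))
    (hent : 1 < entCur γ ℓ) :
    ∃ x₀ : E2, ∃ t₀ : ℝ, 0 < t₀ ∧ Fcur γ ℓ x₀ t₀ = entCur γ ℓ := by
  have hcont : Continuous γ := hγ.continuous
  set S := {a : ℝ | ∃ x₀ : E2, ∃ t₀ : ℝ, 0 < t₀ ∧ a = Fcur γ ℓ x₀ t₀} with hS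
  have hSne : S.Nonempty := ⟨Fcur γ ℓ 0 1, 0, 1, one_pos, rfl⟩
  have hSbdd : BddAbove S := ent_bddAbove hγ hunit hℓ hper hinj
  have hsup : entCur γ ℓ = sSup S := rfl
  set lam := entCur γ ℓ with hlam
  set ε' := min 1 ((lam - 1)/2) with hε'
  have hε'0 : 0 < ε' := lt_min one_pos (by linarith)
  have hε'1 : ε' ≤ 1 := min_le_left _ _
  set β := 1 + ε' with hβ
  have hβ1 : 1 < β := by linarith
  have hβlam : β < lam := by
    have h1 : ε' ≤ (lam - 1)/2 := min_le_right _ _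
    have : β ≤ 1 + (lam - 1)/2 := by linarith
    linarith
  obtain ⟨δ, hδ0, hsmall⟩ := small_time hγ hunit hℓ hper hinj hε'0 hε'1
  set T := max δ (ℓ^2/(4*π)) with hT
  have hδT : δ ≤ T := le_max_left _ _
  have hT0 : 0 < T := lt_of_lt_of_le hδ0 hδT
  -- very large times
  have hbig : ∀ (x : E2) (t₀ : ℝ), T ≤ t₀ → Fcur γ ℓ x t₀ ≤ 1 := by
    intro x t₀ hTt
    have ht₀ : 0 < t₀ := lt_of_lt_of_le hT0 hTt
    refine le_trans (Fcur_le_basic hγ hℓ ht₀) ?_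
    have hl2 : ℓ^2 ≤ 4*π*t₀ := by
      have h1 : ℓ^2/(4*π) ≤ t₀ := le_trans (le_max_right _ _) hTt
      have h2 : (0:ℝ) < 4*π := by positivity
      calc ℓ^2 = (ℓ^2/(4*π)) * (4*π) := by field_simp
        _ ≤ t₀ * (4*π) := mul_le_mul_of_nonneg_right h1 h2.le
        _ = 4*π*t₀ := by ring
    have hsl : ℓ ≤ Real.sqrt (4*π*t₀) := by
      rw [show ℓ = Real.sqrt (ℓ^2) by rw [Real.sqrt_sq hℓ.le]]
      exact Real.sqrt_le_sqrt hl2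
    have hsp : (0:ℝ) < Real.sqrt (4*π*t₀) := by positivity
    rw [inv_mul_le_iff₀ hsp, mul_one]
    exact hsl
  -- curve bound
  obtain ⟨C, hC⟩ := (isCompact_Icc (a := (0:ℝ)) (b := ℓ)).exists_bound_of_continuousOn
    hcont.continuousOn
  have hCg : ∀ t, ‖γ t‖ ≤ C := by
    intro t
    obtain ⟨a, hamem, haeq, _⟩ := gamma_mod hℓ hper t
    rw [← haeq]
    exact hC a ⟨hamem.1, hamem.2.le⟩
  have hC0 : 0 ≤ C := le_trans (norm_nonneg _) (hCg 0)
  -- far-field bound on [δ, T]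
  set A := (Real.sqrt (4*π*δ))⁻¹ * ℓ * (4*T) with hA
  have hA0 : 0 < A := by positivity
  set M := Real.sqrt A + 1 with hM
  have hM0 : 0 < M := by positivity
  have hfarx : ∀ (x : E2) (t₀ : ℝ), δ ≤ t₀ → t₀ ≤ T → M ≤ ‖x‖ - C →
      Fcur γ ℓ x t₀ ≤ 1 := by
    intro x t₀ h1 h2 h3
    have ht₀ : 0 < t₀ := lt_of_lt_of_le hδ0 h1
    have hdist : ∀ t, M ≤ ‖γ t - x‖ := by
      intro t
      have := norm_sub_norm_le (γ t - x) (γ t)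
      have h4 : ‖γ t - x - γ t‖ = ‖x‖ := by rw [show γ t - x - γ t = -x by abel, norm_neg]
      have h5 := hCg t
      rw [norm_sub_rev] at this
      have h6 : ‖x‖ ≤ ‖γ t - x‖ + ‖γ t‖ := by
        calc ‖x‖ = ‖γ t - (γ t - x)‖ := by rw [show γ t - (γ t - x) = x by abel]
          _ ≤ ‖γ t‖ + ‖γ t - x‖ := norm_sub_le _ _
          _ = ‖γ t - x‖ + ‖γ t‖ := by ring
      linarith
    have hF := Fcur_le_of_dist hγ hℓ ht₀ hM0.le hdist
    refine le_trans hF ?_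
    -- prefactor and exp monotone
    have hpre := sqrt_inv_anti hδ0 h1
    have hexple : Real.exp (-M^2/(4*t₀)) ≤ 4*T/M^2 := by
      have hq : (0:ℝ) < M^2/(4*t₀) := by positivity
      have h7 : M^2/(4*T) ≤ Real.exp (M^2/(4*t₀)) := by
        have : M^2/(4*T) ≤ M^2/(4*t₀) := by
          apply div_le_div_of_nonneg_left (by positivity) (by positivity) (by linarith)
        linarith [Real.add_one_le_exp (M^2/(4*t₀))]
      rw [neg_div, Real.exp_neg]
      have h8 : (0:ℝ) < M^2/(4*T) := by positivity
      have := inv_anti₀ h8 h7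
      rw [inv_div] at this
      exact this
    have hMA : A ≤ M^2 := by
      have h9 : Real.sqrt A ^ 2 = A := Real.sq_sqrt hA0.le
      nlinarith [Real.sqrt_nonneg A]
    calc (Real.sqrt (4*π*t₀))⁻¹ * (ℓ * Real.exp (-M^2/(4*t₀)))
        ≤ (Real.sqrt (4*π*δ))⁻¹ * (ℓ * (4*T/M^2)) := by
          apply mul_le_mul hpre (mul_le_mul_of_nonneg_left hexple hℓ.le) (by positivity)
            (by positivity)
      _ = A / M^2 := by rw [hA]; ring
      _ ≤ 1 := by rw [div_le_one (by positivity)]; exact hMA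
  -- compact maximization
  set R := M + C with hR
  have hR0 : 0 < R := by linarith
  set K : Set (E2 × ℝ) := Metric.closedBall (0 : E2) R ×ˢ Set.Icc δ T with hK
  have hKc : IsCompact K := (isCompact_closedBall _ _).prod isCompact_Icc
  have hKne : K.Nonempty := ⟨(0, δ), by
    constructor
    · simp [hR0.le]
    · exact ⟨le_refl δ, hδT⟩⟩
  have hGcont : ContinuousOn (fun p : E2 × ℝ => Fcur γ ℓ p.1 p.2) K := by
    apply (Fcur_contOn hγ hδ0).mono
    intro p hp
    exact ⟨Set.mem_univ _, hp.2⟩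
  obtain ⟨p₀, hp₀K, hmax⟩ := hKc.exists_isMaxOn hKne hGcont
  have hp₀δ : δ ≤ p₀.2 := hp₀K.2.1
  have hp₀pos : 0 < p₀.2 := lt_of_lt_of_le hδ0 hp₀δ
  have hp₀S : Fcur γ ℓ p₀.1 p₀.2 ∈ S := ⟨p₀.1, p₀.2, hp₀pos, rfl⟩
  -- every element of S is ≤ max (value at p₀) β
  have hub : ∀ a ∈ S, a ≤ max (Fcur γ ℓ p₀.1 p₀.2) β := by
    rintro a ⟨x, t₀, ht₀, rfl⟩
    rcases le_or_gt t₀ δ with h | h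
    · refine le_trans (hsmall x t₀ ht₀ h) (le_trans ?_ (le_max_right _ _))
      rw [hβ]
    · rcases le_or_gt t₀ T with h2 | h2
      · rcases le_or_gt ‖x‖ R with h3 | h3
        · have hxK : (x, t₀) ∈ K := by
            constructor
            · simpa [Metric.mem_closedBall, dist_eq_norm] using h3
            · exact ⟨h.le, h2⟩
          exact le_trans (hmax hxK) (le_max_left _ _)
        · have := hfarx x t₀ h.le h2 (by rw [hR] at h3; linarith)
          exact le_trans this (le_trans hβ1.le (le_max_right _ _))
      · have := hbig x t₀ h2.le
        exact le_trans this (le_trans hβ1.le (le_max_right _ _))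
  have hsup_le : lam ≤ max (Fcur γ ℓ p₀.1 p₀.2) β := csSup_le hSne hub
  have hge : lam ≤ Fcur γ ℓ p₀.1 p₀.2 := by
    rcases max_cases (Fcur γ ℓ p₀.1 p₀.2) β with ⟨heq, _⟩ | ⟨heq, _⟩
    · rw [heq] at hsup_le; exact hsup_le
    · rw [heq] at hsup_le; linarith
  have hle : Fcur γ ℓ p₀.1 p₀.2 ≤ lam := le_csSup hSbdd hp₀S
  exact ⟨p₀.1, p₀.2, hp₀pos, le_antisymm hle hge⟩
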